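/- Let G be a d-weighted reachability game and let ≲ be either the componentwise order ≤_C or the lexicographic order ≤_L on (ℕ ∪ {∞})^d, with the sets Iᵏ taken with respect to ≲. For y ∈ (ℕ ∪ {∞})^d and a vertex u, let firstOcc(y,u) denote the least n with y ∈ Iⁿ(u) (when such n exists). Then for every v ∈ V₂ \ F, every x ∈ I^{|V|}(v) with x ≠ (∞,…,∞), every successor v' of v and every x' ∈ I^{|V|}(v') such that x' + w(v,v') ≤_L x, either x' <_L x or firstOcc(x',v') < firstOcc(x,v), where ≤_L denotes the lexicographic order and <_L its strict version. -/
import Mathlib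


open Classical

/-- Cost profiles: `d`-tuples over `ℕ ∪ {∞}`. -/
abbrev CostP (d : ℕ) := Fin d → ℕ∞

/-- The componentwise order `≤_C` on `(ℕ ∪ {∞})^d`. -/
def leC {d : ℕ} (x y : CostP d) : Prop := x ≤ y

/-- The strict lexicographic order `<_L` on `(ℕ ∪ {∞})^d`. -/
def ltL {d : ℕ} (x y : CostP d) : Prop :=
  ∃ i, (∀ j, j < i → x j = y j) ∧ x i < y i

/-- The lexicographic order `≤_L` on `(ℕ ∪ {∞})^d`. -/
def leL {d : ℕ} (x y : CostP d) : Prop := x = y ∨ ltL x y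

/-- Minimal elements of `X` with respect to an order `le`. -/
def minimalSet {α : Type*} (le : α → α → Prop) (X : Set α) : Set α :=
  { x | x ∈ X ∧ ∀ y ∈ X, le y x → y = x }

/-- Upward closure of `X` with respect to an order `le`. -/
def upSet {α : Type*} (le : α → α → Prop) (X : Set α) : Set α :=
  { z | ∃ x ∈ X, le x z }

/-- Translation of a set of cost profiles by (the cast of) a tuple `c ∈ ℕ^d`. -/
def addW {d : ℕ} (X : Set (CostP d)) (c : Fin d → ℕ) : Set (CostP d) :=
  { z | ∃ x ∈ X, z = x + fun i => (c i : ℕ∞) }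

/-- A `d`-weighted reachability game: a finite directed graph whose vertices are
partitioned into Player 1's vertices `V1` and Player 2's vertices (the complement),
an edge relation `E` such that every vertex has a successor, a `d`-dimensional
weight function `w` on edges, and a target set `F`. -/
structure MWGame (V : Type*) (d : ℕ) where
  V1 : Set V
  E : V → V → Prop
  succ_nonempty : ∀ v, ∃ v', E v v'
  w : V → V → Fin d → ℕ
  F : Set V

namespace MWGame

variable {V : Type*} {d : ℕ}

/-- Strategies of Player 1: a choice of successor for every history
(represented as the pair (strict past, current vertex)), valid at Player 1's vertices. -/
def Strat1 (G : MWGame V d) :=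
  { σ : List V → V → V // ∀ h u, u ∈ G.V1 → G.E u (σ h u) }

/-- Strategies of Player 2. -/
def Strat2 (G : MWGame V d) :=
  { σ : List V → V → V // ∀ h u, u ∉ G.V1 → G.E u (σ h u) }

/-- The pair (strict past, current vertex) after `n` steps of the play consistent
with `σ₁` and `σ₂` from `v`. -/
noncomputable def outAux (G : MWGame V d) (σ₁ : G.Strat1) (σ₂ : G.Strat2) (v : V) :
    ℕ → List V × V
  | 0 => ([], v)
  | n + 1 =>
    let q := G.outAux σ₁ σ₂ v n
    (q.1 ++ [q.2], if q.2 ∈ G.V1 then σ₁.1 q.1 q.2 else σ₂.1 q.1 q.2)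

/-- `Out(σ₁,σ₂,v)`: the unique play from `v` consistent with `σ₁` and `σ₂`. -/
noncomputable def out (G : MWGame V d) (σ₁ : G.Strat1) (σ₂ : G.Strat2) (v : V) (n : ℕ) : V :=
  (G.outAux σ₁ σ₂ v n).2

/-- The cost profile of a play: the componentwise sum of weights up to the first
visit of the target set, and `(∞,…,∞)` if the target set is never visited. -/
noncomputable def cost (G : MWGame V d) (ρ : ℕ → V) : CostP d :=
  if h : ∃ ℓ, ρ ℓ ∈ G.F then
    fun i => ∑ n ∈ Finset.range (Nat.find h), (G.w (ρ n) (ρ (n + 1)) i : ℕ∞)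
  else ⊤

/-- `Ensure^k(v)`: cost profiles that Player 1 can ensure from `v` within `k` steps. -/
def EnsureK (G : MWGame V d) (le : CostP d → CostP d → Prop) (k : ℕ) (v : V) :
    Set (CostP d) :=
  { x | ∃ σ₁ : G.Strat1, ∀ σ₂ : G.Strat2,
      le (G.cost (G.out σ₁ σ₂ v)) x ∧
      ∀ h : (∃ ℓ, G.out σ₁ σ₂ v ℓ ∈ G.F), Nat.find h ≤ k }

/-- `Ensure(v)`: cost profiles that Player 1 can ensure from `v`. -/
def Ensure (G : MWGame V d) (le : CostP d → CostP d → Prop) (v : V) : Set (CostP d) :=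
  { x | ∃ σ₁ : G.Strat1, ∀ σ₂ : G.Strat2, le (G.cost (G.out σ₁ σ₂ v)) x }

/-- The sets `Iᵏ(v)` computed by the fixpoint algorithm, relative to the order `le`. -/
noncomputable def Iset (G : MWGame V d) (le : CostP d → CostP d → Prop) :
    ℕ → V → Set (CostP d)
  | 0, v => if v ∈ G.F then {0} else {⊤}
  | k + 1, v =>
    if v ∈ G.F then {0}
    else if v ∈ G.V1 then
      minimalSet le (⋃ v' ∈ { u | G.E v u }, addW (upSet le (G.Iset le k v')) (G.w v v'))
    else
      minimalSet le (⋂ v' ∈ { u | G.E v u }, addW (upSet le (G.Iset le k v')) (G.w v v'))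

end MWGame


section Stmt15Aux

variable {d : ℕ}

private lemma ltL_wf : WellFounded (@ltL d) :=
  (Pi.Lex.wellFoundedLT (ι := Fin d) (α := fun _ => ℕ∞)).wf

private lemma ltL_trans {x y z : CostP d} (h1 : ltL x y) (h2 : ltL y z) : ltL x z :=
  @lt_trans (Lex (Fin d → ℕ∞)) _ (toLex x) (toLex y) (toLex z) h1 h2

private lemma ltL_irrefl (x : CostP d) : ¬ ltL x x :=
  @lt_irrefl (Lex (Fin d → ℕ∞)) _ (toLex x)

private lemma leC_lt {x y : CostP d} (h : x ≤ y) (hne : x ≠ y) : ltL x y :=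
  Pi.lex_lt_of_lt (wellFounded_lt (α := Fin d)) (lt_of_le_of_ne h hne)

variable {le : CostP d → CostP d → Prop}

private lemma hrefl (hle : le = leC ∨ le = leL) (x : CostP d) : le x x := by
  rcases hle with rfl | rfl
  · exact le_refl x
  · exact Or.inl rfl

private lemma htrans (hle : le = leC ∨ le = leL) {x y z : CostP d}
    (h1 : le x y) (h2 : le y z) : le x z := by
  rcases hle with rfl | rfl
  · exact le_trans h1 h2
  · rcases h1 with rfl | h1
    · exact h2
    · rcases h2 with rfl | h2
      · exact Or.inr h1
      · exact Or.inr (ltL_trans h1 h2)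

private lemma hantisymm (hle : le = leC ∨ le = leL) {x y : CostP d}
    (h1 : le x y) (h2 : le y x) : x = y := by
  rcases hle with rfl | rfl
  · exact le_antisymm h1 h2
  · rcases h1 with rfl | h1
    · rfl
    · rcases h2 with rfl | h2
      · rfl
      · exact absurd (ltL_trans h1 h2) (ltL_irrefl x)

private lemma hstrict (hle : le = leC ∨ le = leL) {x y : CostP d}
    (h : le x y) (hne : x ≠ y) : ltL x y := by
  rcases hle with rfl | rfl
  · exact leC_lt h hne
  · exact h.resolve_left hne

private lemma hle_top (hle : le = leC ∨ le = leL) (x : CostP d) : le x ⊤ := by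
  rcases hle with rfl | rfl
  · exact le_top
  · by_cases h : x = ⊤
    · exact Or.inl h
    · exact Or.inr (leC_lt le_top h)

private lemma htop_le (hle : le = leC ∨ le = leL) {x : CostP d} (h : le ⊤ x) : x = ⊤ := by
  rcases hle with rfl | rfl
  · exact top_le_iff.mp h
  · rcases h with h | ⟨i, _, hi⟩
    · exact h.symm
    · exact absurd hi (by simp)

private lemma exists_min (hle : le = leC ∨ le = leL) {X : Set (CostP d)} {x : CostP d}
    (hx : x ∈ X) : ∃ m ∈ minimalSet le X, le m x := by
  obtain ⟨m, ⟨hmX, hmx⟩, hmin⟩ :=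
    ltL_wf.has_min {z | z ∈ X ∧ le z x} ⟨x, hx, hrefl hle x⟩
  refine ⟨m, ⟨hmX, fun y hy hyx => ?_⟩, hmx⟩
  by_contra hne
  exact hmin y ⟨hy, htrans hle hyx hmx⟩ (hstrict hle hyx hne)

variable {V : Type*}

private lemma Iset_F (G : MWGame V d) {u : V} (hF : u ∈ G.F) (k : ℕ) :
    G.Iset le k u = {0} := by
  cases k <;> simp [MWGame.Iset, hF]

private lemma Iset_mono (hle : le = leC ∨ le = leL) (G : MWGame V d) :
    ∀ k (u : V), upSet le (G.Iset le k u) ⊆ upSet le (G.Iset le (k + 1) u) := by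
  intro k
  induction k with
  | zero =>
    intro u y hy
    by_cases hF : u ∈ G.F
    · rwa [Iset_F G hF 1, ← Iset_F G hF 0]
    · obtain ⟨e, he, hey⟩ := hy
      have he' : e = ⊤ := by simpa [MWGame.Iset, hF] using he
      subst he'
      have hytop : y = ⊤ := htop_le hle hey
      subst hytop
      have htopmem : ∀ u', ⊤ ∈ addW (upSet le (G.Iset le 0 u')) (G.w u u') := by
        intro u'
        refine ⟨⊤, ?_, ?_⟩
        · by_cases h' : u' ∈ G.F
          · exact ⟨0, by simp [MWGame.Iset, h'], hle_top hle _⟩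
          · exact ⟨⊤, by simp [MWGame.Iset, h'], hrefl hle _⟩
        · funext i
          simp
      by_cases hV1 : u ∈ G.V1
      · obtain ⟨u', hu'⟩ := G.succ_nonempty u
        have hmem : (⊤ : CostP d) ∈
            ⋃ v' ∈ { w | G.E u w }, addW (upSet le (G.Iset le 0 v')) (G.w u v') :=
          Set.mem_biUnion hu' (htopmem u')
        obtain ⟨m, hm, _⟩ := exists_min hle hmem
        refine ⟨m, ?_, hle_top hle m⟩
        simpa [MWGame.Iset, hF, hV1] using hm
      · have hmem : (⊤ : CostP d) ∈
            ⋂ v' ∈ { w | G.E u w }, addW (upSet le (G.Iset le 0 v')) (G.w u v') :=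
          Set.mem_iInter₂.mpr fun u' _ => htopmem u'
        obtain ⟨m, hm, _⟩ := exists_min hle hmem
        refine ⟨m, ?_, hle_top hle m⟩
        simpa [MWGame.Iset, hF, hV1] using hm
  | succ k ih =>
    intro u y hy
    by_cases hF : u ∈ G.F
    · rwa [Iset_F G hF (k + 2), ← Iset_F G hF (k + 1)]
    · obtain ⟨x₀, hx₀, hx₀y⟩ := hy
      have hsub : ∀ u', addW (upSet le (G.Iset le k u')) (G.w u u') ⊆
          addW (upSet le (G.Iset le (k + 1) u')) (G.w u u') := by
        rintro u' z ⟨t, ht, rfl⟩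
        exact ⟨t, ih u' ht, rfl⟩
      by_cases hV1 : u ∈ G.V1
      · have hx₀' : x₀ ∈ minimalSet le
            (⋃ v' ∈ { w | G.E u w }, addW (upSet le (G.Iset le k v')) (G.w u v')) := by
          simpa [MWGame.Iset, hF, hV1] using hx₀
        obtain ⟨u', hu', hmem⟩ := Set.mem_iUnion₂.mp hx₀'.1
        have hmem' : x₀ ∈
            ⋃ v' ∈ { w | G.E u w }, addW (upSet le (G.Iset le (k + 1) v')) (G.w u v') :=
          Set.mem_biUnion hu' (hsub u' hmem)
        obtain ⟨m, hm, hmx⟩ := exists_min hle hmem'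
        refine ⟨m, ?_, htrans hle hmx hx₀y⟩
        simpa [MWGame.Iset, hF, hV1] using hm
      · have hx₀' : x₀ ∈ minimalSet le
            (⋂ v' ∈ { w | G.E u w }, addW (upSet le (G.Iset le k v')) (G.w u v')) := by
          simpa [MWGame.Iset, hF, hV1] using hx₀
        have hmem' : x₀ ∈
            ⋂ v' ∈ { w | G.E u w }, addW (upSet le (G.Iset le (k + 1) v')) (G.w u v') :=
          Set.mem_iInter₂.mpr fun u' hu' => hsub u' (Set.mem_iInter₂.mp hx₀'.1 u' hu')
        obtain ⟨m, hm, hmx⟩ := exists_min hle hmem'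
        refine ⟨m, ?_, htrans hle hmx hx₀y⟩
        simpa [MWGame.Iset, hF, hV1] using hm

private lemma Iset_mono_le (hle : le = leC ∨ le = leL) (G : MWGame V d)
    {k n : ℕ} (hkn : k ≤ n) (u : V) :
    upSet le (G.Iset le k u) ⊆ upSet le (G.Iset le n u) := by
  induction n with
  | zero => simpa [Nat.le_zero.mp hkn] using subset_rfl
  | succ n ihn =>
    rcases Nat.lt_or_ge k (n + 1) with h | h
    · exact (ihn (Nat.lt_succ_iff.mp h)).trans (Iset_mono hle G n u)
    · have : k = n + 1 := le_antisymm hkn h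
      subst this
      exact subset_rfl

end Stmt15Aux

/-- For `v ∈ V₂ \\ F`, a finite `x ∈ I^{|V|}(v)`, a successor `v'` of
`v` and `x' ∈ I^{|V|}(v')` with `x' + w(v,v') ≤_L x`, either `x' <_L x` or the first
occurrence index of `x'` at `v'` is smaller than that of `x` at `v`. -/
theorem stmt15 {V : Type*} [Fintype V] {d : ℕ} (hd : 1 ≤ d) (G : MWGame V d)
    (le : CostP d → CostP d → Prop) (hle : le = leC ∨ le = leL)
    (v : V) (hv2 : v ∉ G.V1) (hvF : v ∉ G.F)
    (x : CostP d) (hx : x ∈ G.Iset le (Fintype.card V) v) (hxne : x ≠ ⊤)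
    (v' : V) (hE : G.E v v')
    (x' : CostP d) (hx' : x' ∈ G.Iset le (Fintype.card V) v')
    (hlex : leL (x' + fun i => (G.w v v' i : ℕ∞)) x) :
    ltL x' x ∨
      Nat.find (⟨Fintype.card V, hx'⟩ : ∃ n, x' ∈ G.Iset le n v') <
        Nat.find (⟨Fintype.card V, hx⟩ : ∃ n, x ∈ G.Iset le n v) := by
  classical
  set N := Fintype.card V with hN
  set wvv : CostP d := (fun i => (G.w v v' i : ℕ∞)) with hwvv
  -- First dispatch the cases where `ltL x' x` holds.
  have hCle : x' ≤ x' + wvv := le_self_add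
  rcases hlex with heq | hl
  swap
  · -- x' + w <_L x
    left
    by_cases h : x' = x' + wvv
    · rwa [h]
    · exact ltL_trans (leC_lt hCle h) hl
  · by_cases hxx : x' = x
    swap
    · -- x' ≠ x, so x' <_L x componentwise
      left
      exact leC_lt (heq ▸ hCle) hxx
    · -- hard case: x' = x and x + w = x
      subst hxx
      right
      rw [heq] at hCle
      have heqx : x' + wvv = x' := heq
      -- basic facts about n = firstOcc x' v
      have hfind := Nat.find_spec (⟨N, hx⟩ : ∃ n, x' ∈ G.Iset le n v)
      set n := Nat.find (⟨N, hx⟩ : ∃ n, x' ∈ G.Iset le n v) with hn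
      have hnN : n ≤ N := Nat.find_le hx
      have hnpos : n ≠ 0 := by
        intro h0
        rw [h0] at hfind
        have : x' = ⊤ := by simpa [MWGame.Iset, hvF] using hfind
        exact hxne this
      obtain ⟨m, hm⟩ : ∃ m, n = m + 1 := ⟨n - 1, (Nat.succ_pred_eq_of_pos (Nat.pos_of_ne_zero hnpos)).symm⟩
      rw [hm] at hfind hnN ⊢
      -- x' belongs to the intersection at level m + 1
      have hfind' : x' ∈ minimalSet le
          (⋂ u ∈ { w | G.E v w }, addW (upSet le (G.Iset le m u)) (G.w v u)) := by
        simpa [MWGame.Iset, hvF, hv2] using hfind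
      have hxmem : x' ∈ addW (upSet le (G.Iset le m v')) (G.w v v') :=
        Set.mem_iInter₂.mp hfind'.1 v' hE
      obtain ⟨t, ⟨z, hz, hzt⟩, hxt⟩ := hxmem
      -- From x' + w = x' we deduce t = x'
      have ht : t = x' := by
        funext i
        have h1 : x' i = t i + (G.w v v' i : ℕ∞) := congrFun hxt i
        have h2 : x' i + (G.w v v' i : ℕ∞) = x' i := congrFun heqx i
        have hwi : ((G.w v v' i : ℕ∞)) ≠ ⊤ := WithTop.coe_ne_top
        have : t i + (G.w v v' i : ℕ∞) = x' i + (G.w v v' i : ℕ∞) := by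
          rw [h2, ← h1]
        exact WithTop.add_right_cancel hwi this
      rw [ht] at hzt
      -- Show x' ∈ Iset le m v'
      have hxm : x' ∈ G.Iset le m v' := by
        by_cases hF' : v' ∈ G.F
        · have h0 : x' ∈ ({0} : Set (CostP d)) := by rwa [Iset_F G hF' N] at hx'
          rw [Iset_F G hF' m]
          exact h0
        · -- v' ∉ F; use minimality of x' in Iset le N v'
          have hNpos : 0 < N := Fintype.card_pos_iff.mpr ⟨v⟩
          obtain ⟨N', hN'⟩ : ∃ N', N = N' + 1 :=
            ⟨N - 1, (Nat.succ_pred_eq_of_pos hNpos).symm⟩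
          have hmN : m ≤ N := le_trans (Nat.le_succ m) hnN
          have hzup : z ∈ upSet le (G.Iset le N v') :=
            Iset_mono_le hle G hmN v' ⟨z, hz, hrefl hle z⟩
          obtain ⟨z₂, hz₂, hz₂z⟩ := hzup
          have hz₂x : le z₂ x' := htrans hle hz₂z hzt
          have hx'N : x' ∈ G.Iset le N v' := hx'
          rw [hN'] at hz₂ hx'N
          have hz₂eq : z₂ = x' := by
            by_cases hV1' : v' ∈ G.V1
            · have hxmin : x' ∈ minimalSet le
                  (⋃ u ∈ { w | G.E v' w }, addW (upSet le (G.Iset le N' u)) (G.w v' u)) := by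
                simpa [MWGame.Iset, hF', hV1'] using hx'N
              have hz₂m : z₂ ∈ minimalSet le
                  (⋃ u ∈ { w | G.E v' w }, addW (upSet le (G.Iset le N' u)) (G.w v' u)) := by
                simpa [MWGame.Iset, hF', hV1'] using hz₂
              exact hxmin.2 z₂ hz₂m.1 hz₂x
            · have hxmin : x' ∈ minimalSet le
                  (⋂ u ∈ { w | G.E v' w }, addW (upSet le (G.Iset le N' u)) (G.w v' u)) := by
                simpa [MWGame.Iset, hF', hV1'] using hx'N
              have hz₂m : z₂ ∈ minimalSet le
                  (⋂ u ∈ { w | G.E v' w }, addW (upSet le (G.Iset le N' u)) (G.w v' u)) := by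
                simpa [MWGame.Iset, hF', hV1'] using hz₂
              exact hxmin.2 z₂ hz₂m.1 hz₂x
          have hxz : x' = z := hantisymm hle (hz₂eq ▸ hz₂z) hzt
          rwa [hxz]
      calc Nat.find (⟨N, hx'⟩ : ∃ n, x' ∈ G.Iset le n v') ≤ m := Nat.find_le hxm
        _ < m + 1 := Nat.lt_succ_self m
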